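/- Let S be a metric space, (μ_n) Borel probability measures on S converging weakly to μ, and (f_n), (g_n) sequences of measurable functions on S with f_n(s) ≥ g_n(s) for all n and s, f_n extended-real-valued, g_n real-valued. Assume all relevant integrals are defined and −∞ < ∫_S limsup_{n→∞, s'→s} g_n(s') dμ(s) ≤ liminf_n ∫_S g_n dμ_n. Then ∫_S liminf_{n→∞, s'→s} f_n(s') dμ(s) ≤ liminf_n ∫_S f_n dμ_n. -/

import Mathlib

open MeasureTheory Filter Topology ENNReal

/-- The positive part of an extended real number, as an element of `ℝ≥0∞`. -/
noncomputable def eposPart (x : EReal) : ℝ≥0∞ :=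
  if x = ⊤ then ⊤ else ENNReal.ofReal x.toReal

/-- The integral of an extended-real-valued function: `∫ f⁺ dμ − ∫ f⁻ dμ`. -/
noncomputable def eintegral {S : Type*} [MeasurableSpace S]
    (μ : MeasureTheory.Measure S) (f : S → EReal) : EReal :=
  ((∫⁻ s, eposPart (f s) ∂μ : ℝ≥0∞) : EReal) -
    ((∫⁻ s, eposPart (-f s) ∂μ : ℝ≥0∞) : EReal)

/-- The integral of an extended-real-valued function `f` is defined when
`min(∫ f⁺ dμ, ∫ f⁻ dμ) < ∞`. -/
def EIntegralDefined {S : Type*} [MeasurableSpace S]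
    (μ : MeasureTheory.Measure S) (f : S → EReal) : Prop :=
  (∫⁻ s, eposPart (f s) ∂μ) ≠ ⊤ ∨ (∫⁻ s, eposPart (-f s) ∂μ) ≠ ⊤

open Set

section Aux
@[simp] lemma eposPart_top : eposPart ⊤ = ⊤ := by simp [eposPart]
@[simp] lemma eposPart_bot : eposPart ⊥ = 0 := by simp [eposPart]
@[simp] lemma eposPart_coe (r : ℝ) : eposPart (r : EReal) = ENNReal.ofReal r := by
  simp [eposPart]

lemma monotone_eposPart : Monotone eposPart := by
  intro x y hxy
  induction y using EReal.rec with
  | bot => rw [le_bot_iff.mp hxy]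
  | top => simp
  | coe q =>
    induction x using EReal.rec with
    | bot => simp
    | top => exact absurd hxy (by simp)
    | coe p =>
      simp only [eposPart_coe]
      exact ENNReal.ofReal_le_ofReal (EReal.coe_le_coe_iff.mp hxy)

lemma measurable_eposPart : Measurable eposPart := by
  unfold eposPart
  exact Measurable.ite (by simp [Set.setOf_eq_eq_singleton, measurableSet_singleton])
    measurable_const (ENNReal.measurable_ofReal.comp measurable_ereal_toReal)

lemma eposPart_eq_top_iff {x : EReal} : eposPart x = ⊤ ↔ x = ⊤ := by
  unfold eposPart; split <;> simp_all

/-- Pointwise identity used on the `μs n` side. -/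
lemma eposPart_ident {x : EReal} {r : ℝ} (h : (r : EReal) ≤ x) :
    eposPart x + eposPart (-(r : EReal)) =
      eposPart (x - (r : EReal)) + eposPart (r : EReal) + eposPart (-x) := by
  induction x using EReal.rec with
  | bot => exact absurd h (by simp)
  | top =>
    rw [EReal.top_sub_coe]
    simp
  | coe q =>
    have hq : r ≤ q := EReal.coe_le_coe_iff.mp h
    rw [show ((q : EReal) - (r : EReal)) = ((q - r : ℝ) : EReal) by norm_cast,
      show (-(q : EReal)) = ((-q : ℝ) : EReal) by norm_cast,
      show (-(r : EReal)) = ((-r : ℝ) : EReal) by norm_cast]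
    simp only [eposPart_coe]
    rcases le_total 0 q with hq0 | hq0
    · rcases le_total 0 r with hr0 | hr0
      · rw [ENNReal.ofReal_of_nonpos (by linarith : -r ≤ 0),
          ENNReal.ofReal_of_nonpos (by linarith : -q ≤ 0),
          ← ENNReal.ofReal_add (by linarith) hr0]
        norm_num
      · rw [ENNReal.ofReal_of_nonpos (by linarith : -q ≤ 0),
          ENNReal.ofReal_of_nonpos hr0]
        simp only [add_zero, zero_add]
        rw [← ENNReal.ofReal_add hq0 (by linarith : (0:ℝ) ≤ -r),
          show q + -r = q - r by ring]
    · have hr0 : r ≤ 0 := le_trans hq hq0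
      rw [ENNReal.ofReal_of_nonpos hq0, ENNReal.ofReal_of_nonpos hr0]
      simp only [add_zero, zero_add]
      rw [← ENNReal.ofReal_add (by linarith : (0:ℝ) ≤ q - r) (by linarith : (0:ℝ) ≤ -q),
        show q - r + -q = -r by ring]

/-- Pointwise inequality used on the `μ` side. -/
lemma eposPart_ineq {F D L : EReal} (hD : 0 ≤ D) (hL : L ≠ ⊥) (h : F ≤ L + D) :
    eposPart F + eposPart (-L) ≤ eposPart D + eposPart L + eposPart (-F) := by
  induction F using EReal.rec with
  | bot => simp
  | top =>
    induction L using EReal.rec with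
    | bot => exact absurd rfl hL
    | top => simp
    | coe l =>
      induction D using EReal.rec with
      | bot => exact absurd hD (by simp)
      | top => simp
      | coe d =>
        rw [show ((l : EReal) + (d : EReal)) = ((l + d : ℝ) : EReal) by norm_cast] at h
        exact absurd (top_le_iff.mp h) (EReal.coe_ne_top _)
  | coe f =>
    induction L using EReal.rec with
    | bot => exact absurd rfl hL
    | top => simp
    | coe l =>
      induction D using EReal.rec with
      | bot => exact absurd hD (by simp)
      | top => simp
      | coe d =>
        have hd : 0 ≤ d := by exact_mod_cast hD
        have hfld : f ≤ l + d := by exact_mod_cast h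
        rw [show (-(f : EReal)) = ((-f : ℝ) : EReal) by norm_cast,
          show (-(l : EReal)) = ((-l : ℝ) : EReal) by norm_cast]
        simp only [eposPart_coe]
        rcases le_total 0 f with hf0 | hf0
        · rcases le_total 0 l with hl0 | hl0
          · rw [ENNReal.ofReal_of_nonpos (by linarith : -l ≤ 0)]
            calc ENNReal.ofReal f + 0 = ENNReal.ofReal f := by simp
              _ ≤ ENNReal.ofReal (d + l) := ENNReal.ofReal_le_ofReal (by linarith)
              _ = ENNReal.ofReal d + ENNReal.ofReal l := ENNReal.ofReal_add hd hl0
              _ ≤ _ := le_self_add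
          · calc ENNReal.ofReal f + ENNReal.ofReal (-l)
                = ENNReal.ofReal (f + -l) := (ENNReal.ofReal_add hf0 (by linarith)).symm
              _ ≤ ENNReal.ofReal d := ENNReal.ofReal_le_ofReal (by linarith)
              _ ≤ _ := le_add_of_le_of_nonneg (le_self_add) zero_le'
        · rw [ENNReal.ofReal_of_nonpos hf0, zero_add]
          rcases le_total 0 l with hl0 | hl0
          · rw [ENNReal.ofReal_of_nonpos (by linarith : -l ≤ 0)]
            exact zero_le'
          · calc ENNReal.ofReal (-l) ≤ ENNReal.ofReal (d + -f) :=
                ENNReal.ofReal_le_ofReal (by linarith)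
              _ = ENNReal.ofReal d + ENNReal.ofReal (-f) := ENNReal.ofReal_add hd (by linarith)
              _ ≤ _ := by
                rw [add_assoc]
                exact add_le_add le_rfl (le_add_of_nonneg_of_le zero_le' le_rfl)

section Semicont

variable {X : Type*} [TopologicalSpace X] {β : Type*} [CompleteLinearOrder β] [DenselyOrdered β]

lemma lowerSemicontinuous_liminf (u : ℕ × X → β) :
    LowerSemicontinuous fun x => liminf u (atTop ×ˢ 𝓝 x) := by
  intro x t ht
  obtain ⟨t', ht1, ht2⟩ := exists_between ht
  have hev : ∀ᶠ p in atTop ×ˢ 𝓝 x, t' < u p := eventually_lt_of_lt_liminf ht2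
  rw [eventually_iff, Filter.mem_prod_iff] at hev
  obtain ⟨A, hA, B, hB, hAB⟩ := hev
  filter_upwards [interior_mem_nhds.mpr hB] with y hy
  refine lt_of_lt_of_le ht1 (le_liminf_of_le (by isBoundedDefault) ?_)
  have : A ×ˢ interior B ∈ atTop ×ˢ 𝓝 y :=
    prod_mem_prod hA (isOpen_interior.mem_nhds hy)
  filter_upwards [this] with p hp
  exact (hAB ⟨hp.1, interior_subset hp.2⟩).le

lemma upperSemicontinuous_limsup (u : ℕ × X → β) :
    UpperSemicontinuous fun x => limsup u (atTop ×ˢ 𝓝 x) := by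
  intro x t ht
  obtain ⟨t', ht1, ht2⟩ := exists_between ht
  have hev : ∀ᶠ p in atTop ×ˢ 𝓝 x, u p < t' := eventually_lt_of_limsup_lt ht1
  rw [eventually_iff, Filter.mem_prod_iff] at hev
  obtain ⟨A, hA, B, hB, hAB⟩ := hev
  filter_upwards [interior_mem_nhds.mpr hB] with y hy
  refine lt_of_le_of_lt (limsup_le_of_le (by isBoundedDefault) ?_) ht2
  have : A ×ˢ interior B ∈ atTop ×ˢ 𝓝 y :=
    prod_mem_prod hA (isOpen_interior.mem_nhds hy)
  filter_upwards [this] with p hp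
  exact (hAB ⟨hp.1, interior_subset hp.2⟩).le

end Semicont

section LiminfCoe

variable {α : Type*} {l : Filter α}

lemma exists_real_between_eposPart {y : ℝ≥0∞} {c : EReal} (h : y < eposPart c) :
    ∃ r : ℝ, (r : EReal) < c ∧ y < ENNReal.ofReal r := by
  induction c using EReal.rec with
  | bot => simp at h
  | top =>
    have hy : y ≠ ⊤ := h.ne_top.imp_symm fun _ => by simp_all
    refine ⟨y.toReal + 1, EReal.coe_lt_top _, ?_⟩
    rw [ENNReal.lt_ofReal_iff_toReal_lt hy]
    linarith
  | coe q =>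
    rw [eposPart_coe] at h
    have hy : y ≠ ⊤ := (h.trans ENNReal.ofReal_lt_top).ne
    have hyq : y.toReal < q := by
      rwa [ENNReal.lt_ofReal_iff_toReal_lt hy] at h
    obtain ⟨r, hr1, hr2⟩ := exists_between hyq
    exact ⟨r, EReal.coe_lt_coe_iff.mpr hr2, (ENNReal.lt_ofReal_iff_toReal_lt hy).mpr hr1⟩

lemma eposPart_liminf_le (u : α → EReal) :
    eposPart (liminf u l) ≤ liminf (fun a => eposPart (u a)) l := by
  rw [le_liminf_iff]
  intro y hy
  obtain ⟨r, hr1, hr2⟩ := exists_real_between_eposPart hy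
  filter_upwards [eventually_lt_of_lt_liminf hr1] with a ha
  calc y < ENNReal.ofReal r := hr2
    _ = eposPart (r : EReal) := (eposPart_coe r).symm
    _ ≤ eposPart (u a) := monotone_eposPart ha.le

lemma coe_ennreal_liminf (x : ℕ → ℝ≥0∞) :
    ((liminf x atTop : ℝ≥0∞) : EReal) = liminf (fun n => (x n : EReal)) atTop := by
  exact Monotone.map_liminf_of_continuousAt
    (fun a b hab => EReal.coe_ennreal_le_coe_ennreal_iff.mpr hab) x
    (continuous_coe_ennreal_ereal.continuousAt)

end LiminfCoe

/-- Layer cake formula for `ℝ≥0∞`-valued functions. -/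
lemma layercake_ennreal {S : Type*} [MeasurableSpace S] (μ : Measure S) [SFinite μ]
    {H : S → ℝ≥0∞} (hm : Measurable H) :
    ∫⁻ s, H s ∂μ = ∫⁻ t in Ioi (0 : ℝ), μ {s | ENNReal.ofReal t < H s} := by
  set ν := volume.restrict (Ioi (0 : ℝ))
  have hE : MeasurableSet {p : S × ℝ | ENNReal.ofReal p.2 < H p.1} :=
    measurableSet_lt (ENNReal.measurable_ofReal.comp measurable_snd)
      (hm.comp measurable_fst)
  have h1 : ∀ s, ν {t | ENNReal.ofReal t < H s} = H s := by
    intro s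
    have hms : MeasurableSet {t : ℝ | ENNReal.ofReal t < H s} :=
      measurableSet_lt ENNReal.measurable_ofReal measurable_const
    rw [Measure.restrict_apply hms]
    rcases eq_or_ne (H s) ⊤ with htop | hfin
    · have : {t : ℝ | ENNReal.ofReal t < H s} = univ := by
        ext t; simp [htop, ENNReal.ofReal_lt_top]
      rw [this, univ_inter, htop, Real.volume_Ioi]
    · have : {t : ℝ | ENNReal.ofReal t < H s} ∩ Ioi 0 = Ioo 0 (H s).toReal := by
        ext t
        simp only [mem_inter_iff, mem_setOf_eq, mem_Ioi, mem_Ioo]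
        constructor
        · rintro ⟨h1, h2⟩
          exact ⟨h2, (ENNReal.ofReal_lt_iff_lt_toReal h2.le hfin).mp h1⟩
        · rintro ⟨h1, h2⟩
          exact ⟨(ENNReal.ofReal_lt_iff_lt_toReal h1.le hfin).mpr h2, h1⟩
      rw [this, Real.volume_Ioo, sub_zero, ENNReal.ofReal_toReal hfin]
  calc ∫⁻ s, H s ∂μ = ∫⁻ s, ν (Prod.mk s ⁻¹' {p : S × ℝ | ENNReal.ofReal p.2 < H p.1}) ∂μ := by
        refine lintegral_congr fun s => ?_
        rw [show Prod.mk s ⁻¹' {p : S × ℝ | ENNReal.ofReal p.2 < H p.1}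
            = {t | ENNReal.ofReal t < H s} from rfl, h1]
    _ = (μ.prod ν) {p : S × ℝ | ENNReal.ofReal p.2 < H p.1} := (Measure.prod_apply hE).symm
    _ = ∫⁻ t, μ ((fun s => (s, t)) ⁻¹' {p : S × ℝ | ENNReal.ofReal p.2 < H p.1}) ∂ν :=
        Measure.prod_apply_symm hE
    _ = ∫⁻ t in Ioi (0 : ℝ), μ {s | ENNReal.ofReal t < H s} := rfl

section FatouWeak

variable {S : Type*} [MetricSpace S] [MeasurableSpace S] [BorelSpace S]
  {μs : ℕ → Measure S} {μ : Measure S}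

/-- The measure of a superlevel set of the joint liminf is bounded by the liminf of the
measures of superlevel sets, given the open-sets portmanteau inequality. -/
lemma measure_superlevel_le
    (hopen : ∀ G : Set S, IsOpen G → μ G ≤ liminf (fun n => μs n G) atTop)
    (h : ℕ → S → ℝ≥0∞) (c : ℝ≥0∞) :
    μ {s | c < liminf (fun p : ℕ × S => h p.1 p.2) (atTop ×ˢ 𝓝 s)} ≤
      liminf (fun n => μs n {s | c < h n s}) atTop := by
  set O : ℕ → Set S := fun N => interior {s | ∀ n, N ≤ n → c < h n s} with hO
  have hOmono : Monotone O := by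
    intro N M hNM
    exact interior_mono fun s hs n hn => hs n (hNM.trans hn)
  have hsub : {s | c < liminf (fun p : ℕ × S => h p.1 p.2) (atTop ×ˢ 𝓝 s)} ⊆ ⋃ N, O N := by
    intro s hs
    have hev : ∀ᶠ p in atTop ×ˢ 𝓝 s, c < h p.1 p.2 := eventually_lt_of_lt_liminf hs
    rw [eventually_iff, Filter.mem_prod_iff] at hev
    obtain ⟨A, hA, B, hB, hAB⟩ := hev
    obtain ⟨N, hN⟩ := mem_atTop_sets.mp hA
    refine mem_iUnion.mpr ⟨N, ?_⟩
    rw [hO, mem_interior_iff_mem_nhds]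
    exact mem_of_superset hB fun s' hs' n hn => hAB (show (n, s') ∈ A ×ˢ B from ⟨hN n hn, hs'⟩)
  calc μ {s | c < liminf (fun p : ℕ × S => h p.1 p.2) (atTop ×ˢ 𝓝 s)}
      ≤ μ (⋃ N, O N) := measure_mono hsub
    _ = ⨆ N, μ (O N) := (hOmono.directed_le).measure_iUnion
    _ ≤ liminf (fun n => μs n {s | c < h n s}) atTop := by
        refine iSup_le fun N => ?_
        refine le_trans (hopen (O N) isOpen_interior) ?_
        refine liminf_le_liminf ?_
        filter_upwards [eventually_ge_atTop N] with n hn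
        exact measure_mono fun s hs => (interior_subset hs) n hn
end FatouWeak

section FatouWeak2

variable {S : Type*} [MetricSpace S] [MeasurableSpace S] [BorelSpace S]
  {μs : ℕ → Measure S} {μ : Measure S}

/-- Fatou's lemma for nonnegative functions and weakly converging probability measures. -/
lemma fatou_weak_nonneg [∀ n, IsProbabilityMeasure (μs n)] [IsProbabilityMeasure μ]
    (hopen : ∀ G : Set S, IsOpen G → μ G ≤ liminf (fun n => μs n G) atTop)
    (h : ℕ → S → ℝ≥0∞) (hm : ∀ n, Measurable (h n)) :
    ∫⁻ s, liminf (fun p : ℕ × S => h p.1 p.2) (atTop ×ˢ 𝓝 s) ∂μ ≤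
      liminf (fun n => ∫⁻ s, h n s ∂μs n) atTop := by
  have hHm : Measurable fun s => liminf (fun p : ℕ × S => h p.1 p.2) (atTop ×ˢ 𝓝 s) :=
    (lowerSemicontinuous_liminf _).measurable
  rw [layercake_ennreal μ hHm]
  have hstep : ∀ t : ℝ, μ {s | ENNReal.ofReal t <
        liminf (fun p : ℕ × S => h p.1 p.2) (atTop ×ˢ 𝓝 s)} ≤
      liminf (fun n => μs n {s | ENNReal.ofReal t < h n s}) atTop :=
    fun t => measure_superlevel_le hopen h _
  calc ∫⁻ t in Ioi (0:ℝ), μ {s | ENNReal.ofReal t <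
          liminf (fun p : ℕ × S => h p.1 p.2) (atTop ×ˢ 𝓝 s)}
      ≤ ∫⁻ t in Ioi (0:ℝ), liminf (fun n => μs n {s | ENNReal.ofReal t < h n s}) atTop :=
        lintegral_mono fun t => hstep t
    _ ≤ liminf (fun n => ∫⁻ t in Ioi (0:ℝ), μs n {s | ENNReal.ofReal t < h n s}) atTop := by
        refine lintegral_liminf_le fun n => ?_
        refine Antitone.measurable fun t t' htt' => ?_
        exact measure_mono fun s hs => lt_of_le_of_lt (ENNReal.ofReal_le_ofReal htt') hs
    _ = liminf (fun n => ∫⁻ s, h n s ∂μs n) atTop := by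
        refine liminf_congr (Eventually.of_forall fun n => ?_)
        exact (layercake_ennreal (μs n) (hm n)).symm

/-- Portmanteau inequality for open sets, from convergence of integrals of bounded
continuous functions. -/
lemma open_portmanteau [∀ n, IsProbabilityMeasure (μs n)] [IsProbabilityMeasure μ]
    (hweak : ∀ h : S → ℝ, Continuous h → (∃ C : ℝ, ∀ s, |h s| ≤ C) →
      Tendsto (fun n => ∫ s, h s ∂(μs n)) atTop (𝓝 (∫ s, h s ∂μ))) :
    ∀ G : Set S, IsOpen G → μ G ≤ liminf (fun n => μs n G) atTop := by
  intro G hG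
  set P : ℕ → ProbabilityMeasure S := fun n => ⟨μs n, inferInstance⟩
  set Q : ProbabilityMeasure S := ⟨μ, inferInstance⟩
  have htend : Tendsto P atTop (𝓝 Q) := by
    rw [ProbabilityMeasure.tendsto_iff_forall_integral_tendsto]
    intro fb
    exact hweak fb fb.continuous ⟨‖fb‖, fun s => by
      rw [← Real.norm_eq_abs]; exact fb.norm_coe_le_norm s⟩
  exact ProbabilityMeasure.le_liminf_measure_open_of_tendsto htend hG

end FatouWeak2

section ERealAlg

lemma coe_ennreal_eq_real {b : ℝ≥0∞} (hb : b ≠ ⊤) :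
    ((b : EReal)) = ((b.toReal : ℝ) : EReal) := by
  rw [show ((b.toReal : ℝ) : EReal) = (((b : EReal)).toReal : EReal) by
    rw [EReal.toReal_coe_ennreal]]
  rw [EReal.coe_toReal (by simpa using hb) (by simp)]

lemma ereal_sub_nonneg {x : EReal} {r : ℝ} (h : (r : EReal) ≤ x) : 0 ≤ x - (r : EReal) := by
  induction x using EReal.rec with
  | bot => exact absurd h (by simp)
  | top => rw [EReal.top_sub_coe]; exact le_top
  | coe q =>
    rw [show ((q : EReal) - (r : EReal)) = ((q - r : ℝ) : EReal) by norm_cast]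
    exact_mod_cast sub_nonneg.mpr (EReal.coe_le_coe_iff.mp h)

lemma ereal_coe_add_sub_self {x : EReal} {r : ℝ} (h : (r : EReal) ≤ x) :
    (r : EReal) + (x - (r : EReal)) = x := by
  induction x using EReal.rec with
  | bot => exact absurd h (by simp)
  | top => rw [EReal.top_sub_coe, EReal.add_top_of_ne_bot (EReal.coe_ne_bot r)]
  | coe q =>
    rw [show ((q : EReal) - (r : EReal)) = ((q - r : ℝ) : EReal) by norm_cast]
    norm_cast
    ring

lemma ereal_E1 {a b c d e : ℝ≥0∞} (hb : b ≠ ⊤) (h : a + b ≤ c + d + e) :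
    (a : EReal) - (e : EReal) ≤ (c : EReal) + ((d : EReal) - (b : EReal)) := by
  rcases eq_or_ne e ⊤ with he | he
  · rw [he, EReal.coe_ennreal_top, EReal.sub_top]
    exact bot_le
  rcases eq_or_ne c ⊤ with hc | hc
  · rw [hc, EReal.coe_ennreal_top, EReal.top_add_of_ne_bot]
    · exact le_top
    · rw [sub_eq_add_neg, Ne, EReal.add_eq_bot_iff]
      push_neg
      constructor
      · simp
      · rw [Ne, EReal.neg_eq_bot_iff]
        simpa using hb
  rcases eq_or_ne d ⊤ with hd | hd
  · rw [hd, EReal.coe_ennreal_top, coe_ennreal_eq_real hb, EReal.top_sub_coe,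
      EReal.add_top_of_ne_bot (by simp)]
    exact le_top
  have ha : a ≠ ⊤ := by
    intro ha
    rw [ha, top_add] at h
    exact (ENNReal.add_ne_top.mpr ⟨ENNReal.add_ne_top.mpr ⟨hc, hd⟩, he⟩) (top_le_iff.mp h)
  have habtop : a + b ≠ ⊤ := ENNReal.add_ne_top.mpr ⟨ha, hb⟩
  have hreal : a.toReal + b.toReal ≤ c.toReal + d.toReal + e.toReal := by
    have := ENNReal.toReal_mono (ENNReal.add_ne_top.mpr
      ⟨ENNReal.add_ne_top.mpr ⟨hc, hd⟩, he⟩) h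
    rwa [ENNReal.toReal_add ha hb, ENNReal.toReal_add (ENNReal.add_ne_top.mpr ⟨hc, hd⟩) he,
      ENNReal.toReal_add hc hd] at this
  rw [coe_ennreal_eq_real ha, coe_ennreal_eq_real hb, coe_ennreal_eq_real hc,
    coe_ennreal_eq_real hd, coe_ennreal_eq_real he]
  rw [show ((a.toReal : ℝ) : EReal) - ((e.toReal : ℝ) : EReal)
      = ((a.toReal - e.toReal : ℝ) : EReal) by norm_cast,
    show ((d.toReal : ℝ) : EReal) - ((b.toReal : ℝ) : EReal)
      = ((d.toReal - b.toReal : ℝ) : EReal) by norm_cast,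
    show ((c.toReal : ℝ) : EReal) + ((d.toReal - b.toReal : ℝ) : EReal)
      = ((c.toReal + (d.toReal - b.toReal) : ℝ) : EReal) by norm_cast]
  exact EReal.coe_le_coe_iff.mpr (by linarith)

lemma ereal_E2 {a b c d e : ℝ≥0∞} (hb : b ≠ ⊤) (hae : a ≠ ⊤ ∨ e ≠ ⊤)
    (h : c + d + e ≤ a + b) :
    (c : EReal) + ((d : EReal) - (b : EReal)) ≤ (a : EReal) - (e : EReal) := by
  have he : e ≠ ⊤ := by
    rcases hae with ha | he
    · intro he
      rw [he] at h
      have : a + b = ⊤ := top_le_iff.mp (le_trans (by simp) h)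
      exact absurd ((ENNReal.add_eq_top.mp this).resolve_right hb) ha
    · exact he
  rcases eq_or_ne a ⊤ with ha | ha
  · rw [ha, EReal.coe_ennreal_top, coe_ennreal_eq_real he, EReal.top_sub_coe]
    exact le_top
  have habtop : a + b ≠ ⊤ := ENNReal.add_ne_top.mpr ⟨ha, hb⟩
  have hcde : c + d + e ≠ ⊤ := by
    intro hcde
    exact habtop (top_le_iff.mp (hcde ▸ h))
  have hc : c ≠ ⊤ := fun hc => hcde (by simp [hc])
  have hd : d ≠ ⊤ := fun hd => hcde (by simp [hd])
  have hreal : c.toReal + d.toReal + e.toReal ≤ a.toReal + b.toReal := by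
    have := ENNReal.toReal_mono habtop h
    rwa [ENNReal.toReal_add ha hb, ENNReal.toReal_add (ENNReal.add_ne_top.mpr ⟨hc, hd⟩) he,
      ENNReal.toReal_add hc hd] at this
  rw [coe_ennreal_eq_real ha, coe_ennreal_eq_real hb, coe_ennreal_eq_real hc,
    coe_ennreal_eq_real hd, coe_ennreal_eq_real he]
  rw [show ((a.toReal : ℝ) : EReal) - ((e.toReal : ℝ) : EReal)
      = ((a.toReal - e.toReal : ℝ) : EReal) by norm_cast,
    show ((d.toReal : ℝ) : EReal) - ((b.toReal : ℝ) : EReal)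
      = ((d.toReal - b.toReal : ℝ) : EReal) by norm_cast,
    show ((c.toReal : ℝ) : EReal) + ((d.toReal - b.toReal : ℝ) : EReal)
      = ((c.toReal + (d.toReal - b.toReal) : ℝ) : EReal) by norm_cast]
  exact EReal.coe_le_coe_iff.mpr (by linarith)

lemma measurable_add_real {α : Type*} [MeasurableSpace α] {f : α → EReal} {g : α → ℝ}
    (hf : Measurable f) (hg : Measurable g) :
    Measurable fun s => f s + (g s : EReal) := by
  have heq : (fun s => f s + (g s : EReal)) = fun s =>
      if f s = ⊤ then ⊤ else if f s = ⊥ then ⊥ else (((f s).toReal + g s : ℝ) : EReal) := by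
    funext s
    generalize f s = x
    induction x using EReal.rec with
    | bot => simp [EReal.bot_add]
    | top => simp [EReal.top_add_coe]
    | coe q =>
      rw [if_neg (EReal.coe_ne_top q), if_neg (EReal.coe_ne_bot q), EReal.toReal_coe]
      norm_cast
  rw [heq]
  refine Measurable.ite (hf (measurableSet_singleton ⊤)) measurable_const ?_
  refine Measurable.ite (hf (measurableSet_singleton ⊥)) measurable_const ?_
  exact measurable_coe_real_ereal.comp (hf.ereal_toReal.add hg)

end ERealAlg

end Aux

/-- Fatou's lemma for weakly converging probability measures and functions
unbounded below (Theorem 3): if `f_n ≥ g_n` and the joint upper limit of the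
`g_n` satisfies the integral condition, then the integral of the joint lower
limit of the `f_n` is at most the lower limit of the integrals `∫ f_n dμ_n`. -/
theorem fatou_weak_convergence_unbounded_below
    {S : Type*} [MetricSpace S] [MeasurableSpace S] [BorelSpace S]
    (μs : ℕ → Measure S) (μ : Measure S)
    [∀ n, IsProbabilityMeasure (μs n)] [IsProbabilityMeasure μ]
    (hweak : ∀ h : S → ℝ, Continuous h → (∃ C : ℝ, ∀ s, |h s| ≤ C) →
      Tendsto (fun n => ∫ s, h s ∂(μs n)) atTop (𝓝 (∫ s, h s ∂μ)))
    (f : ℕ → S → EReal) (hf : ∀ n, Measurable (f n))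
    (g : ℕ → S → ℝ) (hg : ∀ n, Measurable (g n))
    (hfg : ∀ n s, (g n s : EReal) ≤ f n s)
    (hdf : ∀ n, EIntegralDefined (μs n) (f n))
    (hdliminf : EIntegralDefined μ
      (fun s => liminf (fun p : ℕ × S => f p.1 p.2) (atTop ×ˢ 𝓝 s)))
    (hdg : ∀ n, EIntegralDefined (μs n) (fun s => (g n s : EReal)))
    (hdlimsupg : EIntegralDefined μ
      (fun s => limsup (fun p : ℕ × S => (g p.1 p.2 : EReal)) (atTop ×ˢ 𝓝 s)))
    (hbound : ⊥ < eintegral μ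
      (fun s => limsup (fun p : ℕ × S => (g p.1 p.2 : EReal)) (atTop ×ˢ 𝓝 s)))
    (hle : eintegral μ
        (fun s => limsup (fun p : ℕ × S => (g p.1 p.2 : EReal)) (atTop ×ˢ 𝓝 s)) ≤
      liminf (fun n => eintegral (μs n) (fun s => (g n s : EReal))) atTop) :
    eintegral μ (fun s => liminf (fun p : ℕ × S => f p.1 p.2) (atTop ×ˢ 𝓝 s)) ≤
      liminf (fun n => eintegral (μs n) (f n)) atTop := by
  classical
  -- the difference functions
  set d : ℕ → S → EReal := fun n s => f n s - (g n s : EReal) with hddef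
  set h : ℕ → S → ℝ≥0∞ := fun n s => eposPart (d n s) with hhdef
  set F : S → EReal := fun s => liminf (fun p : ℕ × S => f p.1 p.2) (atTop ×ˢ 𝓝 s) with hFdef
  set L : S → EReal := fun s =>
    limsup (fun p : ℕ × S => (g p.1 p.2 : EReal)) (atTop ×ˢ 𝓝 s) with hLdef
  set D : S → EReal := fun s => liminf (fun p : ℕ × S => d p.1 p.2) (atTop ×ˢ 𝓝 s) with hDdef
  -- measurability
  have hFm : Measurable F := (lowerSemicontinuous_liminf _).measurable
  have hLm : Measurable L := (upperSemicontinuous_limsup _).measurable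
  have hDm : Measurable D := (lowerSemicontinuous_liminf _).measurable
  have hdm : ∀ n, Measurable (d n) := by
    intro n
    have : d n = fun s => f n s + ((-(g n s) : ℝ) : EReal) := by
      funext s
      rw [hddef]
      simp only [EReal.coe_neg, sub_eq_add_neg]
    rw [this]
    exact measurable_add_real (hf n) (hg n).neg
  have hhm : ∀ n, Measurable (h n) := fun n => measurable_eposPart.comp (hdm n)
  -- nonnegativity of the differences
  have hd0 : ∀ n s, 0 ≤ d n s := fun n s => ereal_sub_nonneg (hfg n s)
  -- step 1 : per-n superadditivity of the integral
  have key : ∀ n, (∫⁻ s, eposPart (f n s) ∂μs n) + (∫⁻ s, eposPart (-(g n s : EReal)) ∂μs n)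
      = (∫⁻ s, h n s ∂μs n) + (∫⁻ s, eposPart ((g n s : EReal)) ∂μs n)
        + ∫⁻ s, eposPart (-(f n s)) ∂μs n := by
    intro n
    have hm1 : Measurable fun s => eposPart (f n s) := measurable_eposPart.comp (hf n)
    have hm2 : Measurable fun s => h n s := hhm n
    have hm3 : Measurable fun s => h n s + eposPart ((g n s : ℝ) : EReal) :=
      hm2.add (measurable_eposPart.comp (measurable_coe_real_ereal.comp (hg n)))
    rw [← lintegral_add_left hm1, ← lintegral_add_left hm2, ← lintegral_add_left hm3]
    exact lintegral_congr fun s => eposPart_ident (hfg n s)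
  have h2 : ∀ n, ((∫⁻ s, h n s ∂μs n : ℝ≥0∞) : EReal)
      + eintegral (μs n) (fun s => (g n s : EReal)) ≤ eintegral (μs n) (f n) := by
    intro n
    unfold eintegral
    rcases eq_or_ne (∫⁻ s, eposPart (-((g n s : ℝ) : EReal)) ∂μs n) ⊤ with hb | hb
    · rw [hb, EReal.coe_ennreal_top, EReal.sub_top, EReal.add_bot]
      exact bot_le
    · exact ereal_E2 hb (hdf n) (key n).ge
  -- step 2 : the μ-side inequality
  have hbne : (∫⁻ s, eposPart (-(L s)) ∂μ) ≠ ⊤ := by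
    intro htop
    rw [eintegral, htop, EReal.coe_ennreal_top, EReal.sub_top] at hbound
    exact lt_irrefl _ hbound
  have hLbot : ∀ᵐ s ∂μ, L s ≠ ⊥ := by
    have hm4 : Measurable fun s => eposPart (-(L s)) := measurable_eposPart.comp hLm.neg
    filter_upwards [ae_lt_top hm4 hbne] with s hs hcon
    rw [hcon, EReal.neg_bot, eposPart_top] at hs
    exact lt_irrefl _ hs
  have hD0 : ∀ s, 0 ≤ D s := by
    intro s
    exact le_liminf_of_le (by isBoundedDefault)
      (Eventually.of_forall fun p => hd0 p.1 p.2)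
  have hFDL : ∀ᵐ s ∂μ, F s ≤ L s + D s := by
    filter_upwards [hLbot] with s hs
    have hfeq : (fun p : ℕ × S => f p.1 p.2)
        = (fun p : ℕ × S => (g p.1 p.2 : EReal)) + (fun p : ℕ × S => d p.1 p.2) := by
      funext p
      exact (ereal_coe_add_sub_self (hfg p.1 p.2)).symm
    have hD0' : liminf (fun p : ℕ × S => d p.1 p.2) (atTop ×ˢ 𝓝 s) ≠ ⊥ := by
      intro hcon
      have h0 : (0 : EReal) ≤ liminf (fun p : ℕ × S => d p.1 p.2) (atTop ×ˢ 𝓝 s) := hD0 s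
      rw [hcon] at h0
      simp at h0
    rw [hFdef, hfeq]
    exact EReal.liminf_add_le (Or.inl hs) (Or.inr hD0')
  have hptw : ∀ᵐ s ∂μ, eposPart (F s) + eposPart (-(L s))
      ≤ eposPart (D s) + eposPart (L s) + eposPart (-(F s)) := by
    filter_upwards [hLbot, hFDL] with s hs1 hs2
    exact eposPart_ineq (hD0 s) hs1 hs2
  have hkey : (∫⁻ s, eposPart (F s) ∂μ) + (∫⁻ s, eposPart (-(L s)) ∂μ)
      ≤ (∫⁻ s, eposPart (D s) ∂μ) + (∫⁻ s, eposPart (L s) ∂μ)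
        + ∫⁻ s, eposPart (-(F s)) ∂μ := by
    have hm5 : Measurable fun s => eposPart (F s) := measurable_eposPart.comp hFm
    have hm6 : Measurable fun s => eposPart (D s) := measurable_eposPart.comp hDm
    have hm7 : Measurable fun s => eposPart (D s) + eposPart (L s) :=
      hm6.add (measurable_eposPart.comp hLm)
    rw [← lintegral_add_left hm5, ← lintegral_add_left hm6, ← lintegral_add_left hm7]
    exact lintegral_mono_ae hptw
  have main1 : eintegral μ F ≤ ((∫⁻ s, eposPart (D s) ∂μ : ℝ≥0∞) : EReal) + eintegral μ L := by
    unfold eintegral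
    exact ereal_E1 hbne hkey
  -- step 3 : Fatou for the nonnegative parts
  have hDpt : ∀ s, eposPart (D s) ≤ liminf (fun p : ℕ × S => h p.1 p.2) (atTop ×ˢ 𝓝 s) :=
    fun s => eposPart_liminf_le _
  have hfatou : ∫⁻ s, eposPart (D s) ∂μ ≤ liminf (fun n => ∫⁻ s, h n s ∂μs n) atTop :=
    le_trans (lintegral_mono hDpt)
      (fatou_weak_nonneg (open_portmanteau hweak) h hhm)
  -- final chain
  calc eintegral μ F
      ≤ ((∫⁻ s, eposPart (D s) ∂μ : ℝ≥0∞) : EReal) + eintegral μ L := main1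
    _ ≤ ((liminf (fun n => ∫⁻ s, h n s ∂μs n) atTop : ℝ≥0∞) : EReal) + eintegral μ L :=
        add_le_add (EReal.coe_ennreal_le_coe_ennreal_iff.mpr hfatou) le_rfl
    _ = liminf (fun n => ((∫⁻ s, h n s ∂μs n : ℝ≥0∞) : EReal)) atTop + eintegral μ L := by
        rw [coe_ennreal_liminf]
    _ ≤ liminf (fun n => ((∫⁻ s, h n s ∂μs n : ℝ≥0∞) : EReal)) atTop
        + liminf (fun n => eintegral (μs n) (fun s => (g n s : EReal))) atTop :=
        add_le_add le_rfl hle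
    _ ≤ liminf (fun n => ((∫⁻ s, h n s ∂μs n : ℝ≥0∞) : EReal)
          + eintegral (μs n) (fun s => (g n s : EReal))) atTop := EReal.le_liminf_add
    _ ≤ liminf (fun n => eintegral (μs n) (f n)) atTop :=
        liminf_le_liminf (Eventually.of_forall h2)
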